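/- Let A be a real n×n matrix and P a symmetric positive-definite n×n matrix such that A is α-coercive with respect to the inner product ⟨x,y⟩_P = xᵀPy, i.e. ⟨Ax,x⟩_P ≥ α‖x‖_P² for all x, with α > 0. If the sequence (u_i) satisfies the implicit Euler recursion u_{i+1} + Δt·A·u_{i+1} = u_i with time step Δt > 0, then for all i ∈ ℕ, ‖u_i‖_P² ≤ (1 + 2αΔt)^{-i} ‖u_0‖_P². -/

import Mathlib

open Matrix

/-- Implicit Euler scheme decay estimate for a matrix `A` which is `α`-coercive
with respect to the inner product induced by a symmetric positive-definite `P`. -/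
theorem stmt_0 {n : ℕ} (A P : Matrix (Fin n) (Fin n) ℝ)
    (hPsymm : P.IsSymm) (hPpos : P.PosDef)
    (α : ℝ) (hα : 0 < α)
    (hcoerc : ∀ x : Fin n → ℝ, α * (x ⬝ᵥ P.mulVec x) ≤ (A.mulVec x) ⬝ᵥ P.mulVec x)
    (Δt : ℝ) (hΔt : 0 < Δt)
    (u : ℕ → Fin n → ℝ)
    (hu : ∀ i : ℕ, u (i + 1) + Δt • A.mulVec (u (i + 1)) = u i) :
    ∀ i : ℕ, (u i) ⬝ᵥ P.mulVec (u i) ≤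
      (1 / (1 + 2 * α * Δt)) ^ i * ((u 0) ⬝ᵥ P.mulVec (u 0)) := by
  have hsym : ∀ x y : Fin n → ℝ, x ⬝ᵥ P.mulVec y = y ⬝ᵥ P.mulVec x := by
    intro x y
    rw [dotProduct_mulVec, ← mulVec_transpose, hPsymm.eq, dotProduct_comm]
  have hnonneg : ∀ x : Fin n → ℝ, 0 ≤ x ⬝ᵥ P.mulVec x := by
    intro x
    by_cases hx : x = 0
    · simp [hx]
    · exact le_of_lt (hPpos.dotProduct_mulVec_pos hx)
  have hc : (0:ℝ) < 1 + 2 * α * Δt := by positivity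
  have key : ∀ i, (1 + 2 * α * Δt) * (u (i+1) ⬝ᵥ P.mulVec (u (i+1))) ≤
      u i ⬝ᵥ P.mulVec (u i) := by
    intro i
    have hrec := hu i
    set v := u (i+1) with hv
    calc (1 + 2 * α * Δt) * (v ⬝ᵥ P.mulVec v)
        = v ⬝ᵥ P.mulVec v + 2 * Δt * (α * (v ⬝ᵥ P.mulVec v)) := by ring
      _ ≤ v ⬝ᵥ P.mulVec v + 2 * Δt * ((A.mulVec v) ⬝ᵥ P.mulVec v)
          + Δt ^ 2 * ((A.mulVec v) ⬝ᵥ P.mulVec (A.mulVec v)) := by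
          have h1 := hcoerc v
          have h2 := hnonneg (A.mulVec v)
          nlinarith
      _ = (v + Δt • A.mulVec v) ⬝ᵥ P.mulVec (v + Δt • A.mulVec v) := by
          rw [mulVec_add, mulVec_smul, dotProduct_add, add_dotProduct,
            add_dotProduct, smul_dotProduct, smul_dotProduct, dotProduct_smul,
            dotProduct_smul, hsym v (A.mulVec v)]
          simp only [smul_eq_mul]
          ring
      _ = u i ⬝ᵥ P.mulVec (u i) := by rw [hrec]
  intro i
  induction i with
  | zero => simp
  | succ i ih =>
    have h := key i
    have : u (i+1) ⬝ᵥ P.mulVec (u (i+1)) ≤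
        (1 / (1 + 2 * α * Δt)) * (u i ⬝ᵥ P.mulVec (u i)) := by
      rw [div_mul_eq_mul_div, le_div_iff₀ hc]
      linarith [h]
    calc u (i+1) ⬝ᵥ P.mulVec (u (i+1))
        ≤ (1 / (1 + 2 * α * Δt)) * (u i ⬝ᵥ P.mulVec (u i)) := this
      _ ≤ (1 / (1 + 2 * α * Δt)) * ((1 / (1 + 2 * α * Δt)) ^ i * (u 0 ⬝ᵥ P.mulVec (u 0))) := by
          apply mul_le_mul_of_nonneg_left ih (by positivity)
      _ = (1 / (1 + 2 * α * Δt)) ^ (i+1) * (u 0 ⬝ᵥ P.mulVec (u 0)) := by ring
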